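/- arXiv:1202.1016 — 5 statements merged into one kernel-verified Lean document; each statement's English description precedes it below -/
import Mathlib

section
/- Let c ≥ 1 and p > 0 be real numbers with c·p ≤ 1/e, and let v be a natural number. Then for every natural number r, the success probability of passing r+1 encoding stages of the concatenated fault-tolerant scheme satisfies ∏_{k=0}^{r} (1 − (1/c)·(c·p)^{2^k})^v ≥ exp(−3·p·v). In particular the fidelity of the encoded state is bounded below by a constant (independent of the concatenation level r) of the form e^{−O(p·v)}. -/
lemma key_aux (c p : ℝ) (hc : 1 ≤ c) (hp : 0 < p) (hcp : c * p ≤ 1 / Real.exp 1) :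
    Real.exp (3 * (c * p ^ 2 - p)) ≤ 1 - p := by
  have he : (2.7 : ℝ) < Real.exp 1 := by
    have := Real.exp_one_gt_d9
    linarith
  have he0 : (0 : ℝ) < Real.exp 1 := Real.exp_pos 1
  have hcp' : c * p * Real.exp 1 ≤ 1 := by
    rwa [le_div_iff₀ he0] at hcp
  have hp1 : p ≤ c * p := le_mul_of_one_le_left hp.le hc
  have hcpl : c * p ≤ 1 / 2.7 := by
    rw [le_div_iff₀ (by norm_num : (0:ℝ) < 2.7)]
    nlinarith
  have hpl : p ≤ 1 / 2.7 := le_trans hp1 hcpl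
  set a := 3 * (p - c * p ^ 2) with ha_def
  have ha : 0 ≤ a := by nlinarith
  have h1 : Real.exp (3 * (c * p ^ 2 - p)) = 1 / Real.exp a := by
    rw [one_div, ← Real.exp_neg]; congr 1; rw [ha_def]; ring
  have h2 : 1 + a ≤ Real.exp a := by linarith [Real.add_one_le_exp a]
  have h3 : (0:ℝ) < 1 + a := by linarith
  have h4 : 1 / Real.exp a ≤ 1 / (1 + a) := by
    apply one_div_le_one_div_of_le h3 h2
  have h5 : 1 / (1 + a) ≤ 1 - p := by
    rw [div_le_iff₀ h3]
    nlinarith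
  linarith [h1 ▸ le_trans h4 h5]

/-- **Fidelity of concatenated fault-tolerant encoding.**
If `c ≥ 1`, `p > 0` and `c·p ≤ 1/e`, then for every concatenation level `r`,
the probability of successfully passing the `r+1` encoding stages,
`∏_{k=0}^{r} (1 − (1/c)·(c·p)^{2^k})^v`, is bounded below by `exp(−3·p·v)`,
a constant independent of `r`. -/
theorem concatenated_encoding_fidelity (c p : ℝ) (v : ℕ)
    (hc : 1 ≤ c) (hp : 0 < p) (hcp : c * p ≤ 1 / Real.exp 1) (r : ℕ) :
    ∏ k ∈ Finset.range (r + 1), (1 - (1 / c) * (c * p) ^ (2 ^ k)) ^ v ≥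
      Real.exp (-3 * p * v) := by
  have hc0 : (0:ℝ) < c := lt_of_lt_of_le one_pos hc
  induction r generalizing p with
  | zero =>
    have hterm : (1 / c) * (c * p) ^ (2 ^ 0) = p := by
      field_simp
      simp
    simp only [zero_add, Finset.prod_range_one, hterm]
    have hkey : Real.exp (-3 * p) ≤ 1 - p := by
      refine le_trans ?_ (key_aux c p hc hp hcp)
      apply Real.exp_le_exp.mpr
      nlinarith
    calc Real.exp (-3 * p * v) = (Real.exp (-3 * p)) ^ v := by
          rw [← Real.exp_nat_mul]; ring_nf
      _ ≤ (1 - p) ^ v := by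
          apply pow_le_pow_left₀ (Real.exp_pos _).le hkey
  | succ r ih =>
    set p' := c * p ^ 2 with hp'_def
    have hp'0 : 0 < p' := by positivity
    have hcp'' : c * p' ≤ 1 / Real.exp 1 := by
      have h1 : c * p' = (c * p) ^ 2 := by ring
      have hcp0 : 0 < c * p := by positivity
      have he0 : (0:ℝ) < Real.exp 1 := Real.exp_pos 1
      have he1 : 1 ≤ Real.exp 1 := by
        have := Real.exp_one_gt_d9; linarith
      have hle1 : c * p ≤ 1 := le_trans hcp (by
        rw [div_le_one he0]; exact he1)
      rw [h1]
      calc (c * p) ^ 2 ≤ c * p := by nlinarith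
        _ ≤ 1 / Real.exp 1 := hcp
    have ihp := ih p' hp'0 hcp''
    have hshift : ∀ k : ℕ, (1 - (1 / c) * (c * p) ^ (2 ^ (k + 1))) ^ v
        = (1 - (1 / c) * (c * p') ^ (2 ^ k)) ^ v := by
      intro k
      congr 2
      rw [hp'_def]
      rw [pow_succ, pow_mul]
      congr 1
      ring
    rw [Finset.prod_range_succ']
    have hterm0 : (1 / c) * (c * p) ^ (2 ^ 0) = p := by field_simp; simp
    rw [hterm0]
    simp only [hshift]
    have hkey := key_aux c p hc hp hcp
    have hbase : Real.exp (3 * (c * p ^ 2 - p) * v) ≤ (1 - p) ^ v := by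
      calc Real.exp (3 * (c * p ^ 2 - p) * v)
          = (Real.exp (3 * (c * p ^ 2 - p))) ^ v := by
            rw [← Real.exp_nat_mul]; ring_nf
        _ ≤ (1 - p) ^ v := pow_le_pow_left₀ (Real.exp_pos _).le hkey v
    calc Real.exp (-3 * p * v)
        = Real.exp (-3 * p' * v) * Real.exp (3 * (c * p ^ 2 - p) * v) := by
          rw [← Real.exp_add]; rw [hp'_def]; ring_nf
      _ ≤ (∏ k ∈ Finset.range (r + 1), (1 - (1 / c) * (c * p') ^ (2 ^ k)) ^ v)
            * (1 - p) ^ v := by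
          apply mul_le_mul ihp hbase (Real.exp_pos _).le
          exact le_trans (Real.exp_pos _).le ihp
end

section
/- Let α > 0 be a real number. The function f(z) = ln(1 − α·z)/(z·ln z) is monotonically increasing on the interval (0, β] whenever 0 < β < 1 and α·β < 1; that is, for all 0 < z₁ ≤ z₂ ≤ β one has ln(1 − α·z₁)/(z₁·ln z₁) ≤ ln(1 − α·z₂)/(z₂·ln z₂). -/
/-- **Monotonicity of the integrand.**
For `α > 0`, the function `f(z) = ln(1 − α·z)/(z·ln z)` is monotonically
increasing on `(0, β]` whenever `0 < β < 1` and `α·β < 1`: for all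
`0 < z₁ ≤ z₂ ≤ β` one has `f(z₁) ≤ f(z₂)`. -/
theorem integrand_monotone (α β : ℝ) (hα : 0 < α) (hβ0 : 0 < β) (hβ1 : β < 1)
    (hαβ : α * β < 1) (z₁ z₂ : ℝ) (hz₁ : 0 < z₁) (h12 : z₁ ≤ z₂) (h2β : z₂ ≤ β) :
    Real.log (1 - α * z₁) / (z₁ * Real.log z₁) ≤
      Real.log (1 - α * z₂) / (z₂ * Real.log z₂) := by
  have hz₂ : 0 < z₂ := lt_of_lt_of_le hz₁ h12
  have hz₂1 : z₂ < 1 := lt_of_le_of_lt h2β hβ1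
  have hz₁1 : z₁ < 1 := lt_of_le_of_lt h12 hz₂1
  have hαz₂ : α * z₂ < 1 :=
    lt_of_le_of_lt (mul_le_mul_of_nonneg_left h2β hα.le) hαβ
  have hαz₁ : α * z₁ < 1 :=
    lt_of_le_of_lt (mul_le_mul_of_nonneg_left h12 hα.le) hαz₂
  have h1z₁ : (0:ℝ) < 1 - α * z₁ := by linarith
  have h1z₂ : (0:ℝ) < 1 - α * z₂ := by linarith
  have hlog1 : Real.log (1 - α * z₁) < 0 :=
    Real.log_neg h1z₁ (by nlinarith)
  have hlog2 : Real.log (1 - α * z₂) < 0 :=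
    Real.log_neg h1z₂ (by nlinarith)
  have hlz₁ : Real.log z₁ < 0 := Real.log_neg hz₁ hz₁1
  have hlz₂ : Real.log z₂ < 0 := Real.log_neg hz₂ hz₂1
  -- Bernoulli: 1 - α z₂ ≤ (1 - α z₁) ^ (z₂/z₁)
  set s : ℝ := z₂ / z₁ with hs
  have hs1 : 1 ≤ s := (one_le_div hz₁).mpr h12
  have hbern : 1 - α * z₂ ≤ (1 - α * z₁) ^ s := by
    have := one_add_mul_self_le_rpow_one_add (s := -(α * z₁)) (by linarith)
      (p := s) hs1
    have hsz : s * (α * z₁) = α * z₂ := by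
      rw [hs]; field_simp
    calc 1 - α * z₂ = 1 + s * (-(α * z₁)) := by rw [mul_neg, hsz]; ring
      _ ≤ (1 + -(α * z₁)) ^ s := this
      _ = (1 - α * z₁) ^ s := by ring_nf
  -- hence log(1-αz₂)/z₂ ≤ log(1-αz₁)/z₁
  have hkey : Real.log (1 - α * z₂) / z₂ ≤ Real.log (1 - α * z₁) / z₁ := by
    have hlog_le : Real.log (1 - α * z₂) ≤ s * Real.log (1 - α * z₁) := by
      have := Real.log_le_log h1z₂ hbern
      rwa [Real.log_rpow h1z₁] at this
    rw [div_le_div_iff₀ hz₂ hz₁]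
    have : s * Real.log (1 - α * z₁) * z₁ = Real.log (1 - α * z₁) * z₂ := by
      rw [hs]; field_simp
    nlinarith [mul_le_mul_of_nonneg_right hlog_le hz₁.le]
  -- rewrite both sides as (log(1-αz)/z)/log z
  have e₁ : Real.log (1 - α * z₁) / (z₁ * Real.log z₁)
      = (Real.log (1 - α * z₁) / z₁) / Real.log z₁ := by
    rw [div_div]
  have e₂ : Real.log (1 - α * z₂) / (z₂ * Real.log z₂)
      = (Real.log (1 - α * z₂) / z₂) / Real.log z₂ := by
    rw [div_div]
  rw [e₁, e₂]
  have hN₁ : Real.log (1 - α * z₁) / z₁ < 0 := div_neg_of_neg_of_pos hlog1 hz₁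
  have hN₂ : Real.log (1 - α * z₂) / z₂ < 0 := div_neg_of_neg_of_pos hlog2 hz₂
  have hD : Real.log z₁ ≤ Real.log z₂ := Real.log_le_log hz₁ h12
  rw [show (Real.log (1 - α * z₁) / z₁) / Real.log z₁
      = (-(Real.log (1 - α * z₁) / z₁)) / (-Real.log z₁) by
        rw [neg_div_neg_eq],
    show (Real.log (1 - α * z₂) / z₂) / Real.log z₂
      = (-(Real.log (1 - α * z₂) / z₂)) / (-Real.log z₂) by
        rw [neg_div_neg_eq]]
  exact div_le_div₀ (by linarith) (by linarith) (by linarith) (by linarith)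
end

section
/- Let α > 0 and 0 < β < 1 be real numbers with α·β < 1. Then ∫_{0}^{β} ln(1 − α·z)/(z·ln z) dz ≤ ln(1 − α·β)/ln β. -/
open MeasureTheory

/-- Key monotonicity: for `0 < z ≤ β` with `α*β < 1`,
`z * log (1 - α*β) ≤ β * log (1 - α*z)`. -/
lemma key_slope (α β z : ℝ) (hα : 0 < α) (hz : 0 < z) (hzβ : z ≤ β)
    (hαβ : α * β < 1) : z * Real.log (1 - α * β) ≤ β * Real.log (1 - α * z) := by
  have hβ : 0 < β := hz.trans_le hzβ
  have hs : -1 ≤ -(α * β) := by nlinarith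
  have hp1 : 0 ≤ z / β := by positivity
  have hp2 : z / β ≤ 1 := (div_le_one hβ).2 hzβ
  have hb := rpow_one_add_le_one_add_mul_self hs hp1 hp2
  have h1 : (1 : ℝ) + -(α * β) = 1 - α * β := by ring
  have h2 : (1 : ℝ) + z / β * -(α * β) = 1 - α * z := by field_simp; ring
  rw [h1, h2] at hb
  have hpos : 0 < 1 - α * β := by linarith
  have hlog := Real.log_le_log (by positivity : (0:ℝ) < (1 - α * β) ^ (z / β)) hb
  rw [Real.log_rpow hpos] at hlog
  rw [div_mul_eq_mul_div, div_le_iff₀ hβ] at hlog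
  linarith

/-- **Bounding the integral by its value at the endpoint.**
For `α > 0`, `0 < β < 1` with `α·β < 1`,
`∫_0^β ln(1 − α·z)/(z·ln z) dz ≤ ln(1 − α·β)/ln β`,
which is the estimate of the integral of the monotonically increasing
nonnegative integrand `f` by `β·f(β)`. -/
theorem integral_le_endpoint_bound (α β : ℝ)
    (hα : 0 < α) (hβ0 : 0 < β) (hβ1 : β < 1) (hαβ : α * β < 1) :
    ∫ z in Set.Ioc (0 : ℝ) β, Real.log (1 - α * z) / (z * Real.log z) ≤
      Real.log (1 - α * β) / Real.log β := by
  set f : ℝ → ℝ := fun z => Real.log (1 - α * z) / (z * Real.log z) with hf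
  set C : ℝ := Real.log (1 - α * β) / (β * Real.log β) with hC
  have hlogβ : Real.log β < 0 := Real.log_neg hβ0 hβ1
  have hB : 0 ≤ -Real.log (1 - α * β) := by
    have : 1 - α * β ≤ 1 := by nlinarith
    have := Real.log_nonpos (by linarith) this
    linarith
  -- pointwise bounds
  have hbound : ∀ z ∈ Set.Ioc (0:ℝ) β, 0 ≤ f z ∧ f z ≤ C := by
    rintro z ⟨hz0, hzβ⟩
    have hz1 : z < 1 := lt_of_le_of_lt hzβ hβ1
    have hαz : α * z < 1 := by nlinarith
    have hlogz : Real.log z < 0 := Real.log_neg hz0 hz1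
    have hA : 0 ≤ -Real.log (1 - α * z) := by
      have : 1 - α * z ≤ 1 := by nlinarith
      have := Real.log_nonpos (by linarith) this
      linarith
    have hkey := key_slope α β z hα hz0 hzβ hαβ
    have hzlog : Real.log z ≤ Real.log β := Real.log_le_log hz0 hzβ
    have hden1 : 0 < z * (-Real.log z) := by nlinarith
    have hden2 : 0 < β * (-Real.log β) := by nlinarith
    have h1 : f z = (-Real.log (1 - α * z)) / (z * (-Real.log z)) := by
      rw [hf]; ring_nf
    have h2 : C = (-Real.log (1 - α * β)) / (β * (-Real.log β)) := by
      rw [hC]; ring_nf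
    constructor
    · rw [h1]; exact div_nonneg hA hden1.le
    · rw [h1, h2, div_le_div_iff₀ hden1 hden2]
      nlinarith [mul_le_mul_of_nonneg_right hkey (show (0:ℝ) ≤ -Real.log β by linarith),
        mul_nonneg (mul_nonneg hz0.le hB) (show (0:ℝ) ≤ Real.log β - Real.log z by linarith)]
  have hmeas : AEStronglyMeasurable f (volume.restrict (Set.Ioc (0:ℝ) β)) := by
    apply Measurable.aestronglyMeasurable
    exact (Real.measurable_log.comp (measurable_const.sub (measurable_id.const_mul α))).div
      (measurable_id.mul Real.measurable_log)
  have hvol : volume (Set.Ioc (0:ℝ) β) < ⊤ := by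
    rw [Real.volume_Ioc]; exact ENNReal.ofReal_lt_top
  have hnorm : ∀ z ∈ Set.Ioc (0:ℝ) β, ‖f z‖ ≤ C := by
    intro z hz
    rw [Real.norm_eq_abs, abs_of_nonneg (hbound z hz).1]
    exact (hbound z hz).2
  have hint := norm_setIntegral_le_of_norm_le_const hvol hnorm
  have hμ : (volume (Set.Ioc (0:ℝ) β)).toReal = β := by
    rw [Real.volume_Ioc, ENNReal.toReal_ofReal (by linarith)]; ring
  rw [measureReal_def, hμ] at hint
  calc ∫ z in Set.Ioc (0:ℝ) β, f z ≤ ‖∫ z in Set.Ioc (0:ℝ) β, f z‖ := le_abs_self _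
    _ ≤ C * β := hint
    _ = Real.log (1 - α * β) / Real.log β := by
        rw [hC, mul_comm β (Real.log β), ← div_div, div_mul_cancel₀ _ (ne_of_gt hβ0)]
end

section
/- (Encoding as teleportation) Let ψ = a·e₀ + b·e₁ be a qubit state (a, b ∈ ℂ) and Φ⁺ = (e_{00} + e_{11})/√2 the Bell state. On the three-qubit space, consider the protocol: measure X₁X₂ with outcome ε ∈ {+1, −1}; if ε = −1 apply Z₂Z₃; then measure Z₁Z₂ with outcome δ ∈ {+1, −1}; if δ = −1 apply X₂X₃. Then for every pair of outcomes (ε, δ), the resulting (unnormalized) state equals (1/2) · Φ⁺₁₂ ⊗ ψ₃; i.e., qubit 3 carries the initial state of qubit 1 while qubits 1 and 2 are left in the Bell state, and each outcome pair occurs with probability 1/4 when ψ is a unit vector. -/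
noncomputable section

/-- Flip the bits of a string `s : ι → Bool` at the positions in `A`. -/
def flipSet {ι : Type*} [DecidableEq ι] (A : Finset ι) (s : ι → Bool) : ι → Bool :=
  fun i => if i ∈ A then !(s i) else s i

/-- The Pauli-type operator `X_A = ⊗_{i ∈ A} σ_x` on the multi-qubit Hilbert space
`EuclideanSpace ℂ (ι → Bool)`: it permutes the standard basis vectors by flipping
the bits in `A`, i.e. `X_A e_s = e_{s ⊕ χ_A}`. -/
def XOp {ι : Type*} [Fintype ι] [DecidableEq ι] (A : Finset ι) :
    EuclideanSpace ℂ (ι → Bool) →ₗ[ℂ] EuclideanSpace ℂ (ι → Bool) where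
  toFun f := WithLp.toLp 2 (fun s => f (flipSet A s))
  map_add' _ _ := rfl
  map_smul' _ _ := rfl

/-- The Pauli-type operator `Z_B = ⊗_{i ∈ B} σ_z` on the multi-qubit Hilbert space:
it acts diagonally by `Z_B e_s = (−1)^{|{i ∈ B : s i = true}|} e_s`. -/
def ZOp {ι : Type*} [Fintype ι] [DecidableEq ι] (B : Finset ι) :
    EuclideanSpace ℂ (ι → Bool) →ₗ[ℂ] EuclideanSpace ℂ (ι → Bool) where
  toFun f := WithLp.toLp 2 (fun s => (-1 : ℂ) ^ (B.filter (fun i => s i = true)).card * f s)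
  map_add' f g := by
    ext s
    simp [mul_add]
  map_smul' c f := by
    ext s
    simp [Pi.smul_apply, smul_eq_mul]
    ring

/-- The standard (computational) basis vector `e_s` of the multi-qubit space. -/
def basisVec {ι : Type*} [Fintype ι] [DecidableEq ι] (s : ι → Bool) :
    EuclideanSpace ℂ (ι → Bool) :=
  EuclideanSpace.single s 1

open scoped Classical

/-- The three-qubit Hilbert space, basis indexed by bit strings of length 3. -/
abbrev ThreeQubit := EuclideanSpace ℂ (Fin 3 → Bool)

/-- Projection `(1 + ε·O)/2` onto the `ε`-eigenspace of an observable `O`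
(for `ε = ±1`), i.e. measuring `O` with outcome `ε`. -/
def measProj (ε : ℂ) (O : ThreeQubit →ₗ[ℂ] ThreeQubit) : ThreeQubit →ₗ[ℂ] ThreeQubit :=
  (2 : ℂ)⁻¹ • (LinearMap.id + ε • O)

/-- The initial state `ψ ⊗ Φ⁺` with `ψ = a·e₀ + b·e₁` on qubit 1 and the Bell
state `Φ⁺ = (e₀₀ + e₁₁)/√2` on qubits 2 and 3. -/
def teleportInit (a b : ℂ) : ThreeQubit :=
  (Real.sqrt 2 : ℂ)⁻¹ •
    (a • basisVec ![false, false, false] + a • basisVec ![false, true, true] +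
      b • basisVec ![true, false, false] + b • basisVec ![true, true, true])

/-- The (unnormalized) state resulting from the teleportation protocol with
measurement outcomes `ε` (of `X₁X₂`) and `δ` (of `Z₁Z₂`): measure `X₁X₂`, apply
`Z₂Z₃` if `ε = −1`, measure `Z₁Z₂`, apply `X₂X₃` if `δ = −1`. -/
def teleportResult (a b ε δ : ℂ) : ThreeQubit :=
  (if δ = -1 then XOp ({1, 2} : Finset (Fin 3)) else LinearMap.id)
    (measProj δ (ZOp ({0, 1} : Finset (Fin 3)))
      ((if ε = -1 then ZOp ({1, 2} : Finset (Fin 3)) else LinearMap.id)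
        (measProj ε (XOp ({0, 1} : Finset (Fin 3))) (teleportInit a b))))


open scoped InnerProductSpace ComplexConjugate

lemma flipSet_invol {ι : Type*} [DecidableEq ι] (A : Finset ι) (s : ι → Bool) :
    flipSet A (flipSet A s) = s := by
  funext i; simp [flipSet]; split <;> simp

lemma X_basis {ι : Type*} [Fintype ι] [DecidableEq ι] (A : Finset ι) (t : ι → Bool) :
    XOp A (basisVec t) = basisVec (flipSet A t) := by
  ext s
  show basisVec t (flipSet A s) = basisVec (flipSet A t) s
  simp only [basisVec, EuclideanSpace.single_apply]
  congr 1
  simp only [eq_iff_iff]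
  constructor
  · rintro rfl; exact (flipSet_invol A s).symm
  · rintro rfl; exact flipSet_invol A t

lemma Z_basis {ι : Type*} [Fintype ι] [DecidableEq ι] (B : Finset ι) (t : ι → Bool) :
    ZOp B (basisVec t) =
      ((-1 : ℂ) ^ (B.filter (fun i => t i = true)).card) • basisVec t := by
  ext s
  show (-1 : ℂ) ^ (B.filter (fun i => s i = true)).card * basisVec t s = _
  simp only [basisVec, PiLp.smul_apply, EuclideanSpace.single_apply, smul_eq_mul]
  by_cases h : s = t
  · subst h; simp
  · simp [h]

lemma flipSet3 (A : Finset (Fin 3)) (x y z : Bool) :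
    flipSet A ![x,y,z] = ![if 0 ∈ A then !x else x, if 1 ∈ A then !y else y,
      if 2 ∈ A then !z else z] := by
  funext i; fin_cases i <;> rfl

lemma vec3_eq_iff (x y z x' y' z' : Bool) :
    (![x,y,z] = ![x',y',z']) ↔ (x = x' ∧ y = y' ∧ z = z') := by
  constructor
  · intro h; exact ⟨congrFun h 0, congrFun h 1, congrFun h 2⟩
  · rintro ⟨rfl, rfl, rfl⟩; rfl

lemma teleport_key (a b ε δ : ℂ)
    (hε : ε = 1 ∨ ε = -1) (hδ : δ = 1 ∨ δ = -1) :
    teleportResult a b ε δ =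
      (2 : ℂ)⁻¹ • ((Real.sqrt 2 : ℂ)⁻¹ •
        (a • basisVec ![false, false, false] + b • basisVec ![false, false, true] +
          a • basisVec ![true, true, false] + b • basisVec ![true, true, true])) := by
  have h1 : (1 : ℂ) ≠ -1 := by norm_num
  rcases hε with rfl | rfl <;> rcases hδ with rfl | rfl <;>
  · rw [teleportResult]
    simp [if_pos rfl, if_neg h1, measProj, teleportInit, LinearMap.smul_apply,
      LinearMap.add_apply, LinearMap.id_apply, map_add, map_smul, X_basis, Z_basis,
      flipSet3, Finset.filter_insert, Finset.filter_singleton, Matrix.cons_val_zero,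
      Matrix.cons_val_one, Matrix.head_cons, Fin.isValue]
    module

lemma teleport_norm (a b : ℂ) (hab : ‖a‖ ^ 2 + ‖b‖ ^ 2 = 1) :
    ‖(2 : ℂ)⁻¹ • ((Real.sqrt 2 : ℂ)⁻¹ •
        (a • basisVec ![false, false, false] + b • basisVec ![false, false, true] +
          a • basisVec ![true, true, false] + b • basisVec ![true, true, true]))‖ = 1/2 := by
  set w : EuclideanSpace ℂ (Fin 3 → Bool) :=
    a • basisVec ![false, false, false] + b • basisVec ![false, false, true] +
      a • basisVec ![true, true, false] + b • basisVec ![true, true, true] with hw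
  have hsq : ‖w‖ ^ 2 = 2 := by
    rw [← inner_self_eq_norm_sq (𝕜 := ℂ) w]
    have : ⟪w, w⟫_ℂ = ((‖a‖^2 + ‖b‖^2 : ℝ) : ℂ) * 2 := by
      simp only [hw, basisVec, inner_add_left, inner_add_right, inner_smul_left,
        inner_smul_right, EuclideanSpace.inner_single_left, EuclideanSpace.single_apply]
      norm_num [Complex.mul_conj', vec3_eq_iff]
      ring
    rw [this, hab]
    norm_num
  have hnw : ‖w‖ = Real.sqrt 2 := by
    rw [← Real.sqrt_sq (norm_nonneg w), hsq]
  rw [norm_smul, norm_smul, hnw]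
  have h2 : (Real.sqrt 2 : ℝ) > 0 := by positivity
  rw [norm_inv, norm_inv, Complex.norm_ofNat]
  rw [Complex.norm_real]
  rw [Real.norm_eq_abs, abs_of_pos h2]
  field_simp

/-- **Encoding as teleportation.** For every pair of measurement outcomes
`(ε, δ) ∈ {±1}²`, the teleportation protocol leaves the three qubits in the
(unnormalized) state `(1/2) · Φ⁺₁₂ ⊗ ψ₃`: qubit 3 carries the initial state
`ψ = a·e₀ + b·e₁` of qubit 1, qubits 1 and 2 are in the Bell state `Φ⁺`, and
each outcome pair occurs with probability `(1/2)² = 1/4` when `ψ` is a unit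
vector. -/
theorem teleportation_protocol (a b ε δ : ℂ)
    (hε : ε = 1 ∨ ε = -1) (hδ : δ = 1 ∨ δ = -1) :
    teleportResult a b ε δ =
      (2 : ℂ)⁻¹ • ((Real.sqrt 2 : ℂ)⁻¹ •
        (a • basisVec ![false, false, false] + b • basisVec ![false, false, true] +
          a • basisVec ![true, true, false] + b • basisVec ![true, true, true])) ∧
    (‖a‖ ^ 2 + ‖b‖ ^ 2 = 1 → ‖teleportResult a b ε δ‖ = 1 / 2) := by
  have key := teleport_key a b ε δ hε hδ
  exact ⟨key, fun hab => by rw [key]; exact teleport_norm a b hab⟩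

end
end

section
/- In the planar code lattice of arbitrary size, every star and every plaquette share an even number of edges: for every vertex v and every face f of the lattice, the cardinality of s(v) ∩ p(f) is 0 or 2. Consequently every star operator X_{s(v)} commutes with every plaquette operator Z_{p(f)}. -/
noncomputable section

/-- The edges of the planar code lattice with `n` columns and `m` rows of
vertices.  `horiz i j` is the horizontal edge joining vertices `(i, j)` and
`(i+1, j)`; `vert i j` (for `j : Fin (m+1)`) is the vertical edge in column `i`
lying between vertex rows `j-1` and `j` — so `vert i 0` is the dangling edge
below the bottom row and `vert i m` the dangling edge above the top row
(rough top and bottom boundaries, smooth left and right boundaries). -/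
inductive PCEdge (n m : ℕ) : Type where
  | horiz : Fin (n - 1) → Fin m → PCEdge n m
  | vert : Fin n → Fin (m + 1) → PCEdge n m
  deriving DecidableEq, Fintype

/-- Whether an edge belongs to the star `s(v)` of the vertex `v = (i, j)`:
the set of edges incident to `v`. -/
def inStar {n m : ℕ} (v : Fin n × Fin m) : PCEdge n m → Bool
  | .horiz i j => decide (j = v.2) && (decide (i.val = v.1.val) || decide (i.val + 1 = v.1.val))
  | .vert i j => decide (i = v.1) && (decide (j.val = v.2.val) || decide (j.val = v.2.val + 1))

/-- The star `s(v)` of a vertex `v`, as a finite set of edges. -/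
def star {n m : ℕ} (v : Fin n × Fin m) : Finset (PCEdge n m) :=
  Finset.univ.filter (fun e => inStar v e = true)

/-- Whether an edge belongs to the plaquette `p(f)` of the unit square face
`f = (i, j)` (the square with corners `(i, j)`, `(i+1, j)`, `(i, j+1)`,
`(i+1, j+1)`): its four boundary edges. -/
def inPlaquette {n m : ℕ} (f : Fin (n - 1) × Fin (m - 1)) : PCEdge n m → Bool
  | .horiz i j => decide (i.val = f.1.val) &&
      (decide (j.val = f.2.val) || decide (j.val = f.2.val + 1))
  | .vert i j => decide (j.val = f.2.val + 1) &&
      (decide (i.val = f.1.val) || decide (i.val = f.1.val + 1))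

/-- The plaquette `p(f)` of a face `f`, as a finite set of edges. -/
def plaquette {n m : ℕ} (f : Fin (n - 1) × Fin (m - 1)) : Finset (PCEdge n m) :=
  Finset.univ.filter (fun e => inPlaquette f e = true)

lemma neg_one_pow_filter {ι : Type*} (B : Finset ι) (p : ι → Prop) [DecidablePred p] :
    ((-1 : ℂ)) ^ (B.filter p).card = ∏ i ∈ B, if p i then (-1 : ℂ) else 1 := by
  rw [← Finset.prod_filter, Finset.prod_const]

lemma XZ_comm {ι : Type*} [Fintype ι] [DecidableEq ι] (A B : Finset ι)
    (h : Even (A ∩ B).card) :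
    XOp A ∘ₗ ZOp B = ZOp B ∘ₗ XOp A := by
  apply LinearMap.ext
  intro g
  ext s
  show (-1 : ℂ) ^ (B.filter (fun i => flipSet A s i = true)).card * g (flipSet A s)
      = (-1 : ℂ) ^ (B.filter (fun i => s i = true)).card * g (flipSet A s)
  congr 1
  have key : (-1 : ℂ) ^ (B.filter (fun i => flipSet A s i = true)).card *
      (-1 : ℂ) ^ (B.filter (fun i => s i = true)).card = 1 := by
    rw [neg_one_pow_filter, neg_one_pow_filter, ← Finset.prod_mul_distrib]
    have : ∀ i ∈ B, ((if flipSet A s i = true then (-1 : ℂ) else 1) *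
        (if s i = true then (-1 : ℂ) else 1)) = (if i ∈ A then (-1 : ℂ) else 1) := by
      intro i _
      by_cases hA : i ∈ A
      · cases hs : s i <;> simp [flipSet, hA, hs]
      · cases hs : s i <;> simp [flipSet, hA, hs]
    rw [Finset.prod_congr rfl this, ← neg_one_pow_filter]
    have : B.filter (fun i => i ∈ A) = A ∩ B := by
      ext i; simp [Finset.mem_inter, and_comm]
    rw [this, h.neg_one_pow]
  have sq : (-1 : ℂ) ^ (B.filter (fun i => s i = true)).card *
      (-1 : ℂ) ^ (B.filter (fun i => s i = true)).card = 1 := by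
    rw [← mul_pow]; norm_num
  have hne : ((-1 : ℂ)) ^ (B.filter (fun i => s i = true)).card ≠ 0 := by
    apply pow_ne_zero; norm_num
  exact mul_right_cancel₀ hne (key.trans sq.symm)

/-- **Stars and plaquettes of the planar code overlap evenly.**
In the planar code lattice of arbitrary size, every star and every plaquette
share `0` or `2` edges; consequently every star operator `X_{s(v)}` commutes
with every plaquette operator `Z_{p(f)}`. -/
theorem star_plaquette_even_overlap (n m : ℕ) (hn : 1 ≤ n) (hm : 1 ≤ m)
    (v : Fin n × Fin m) (f : Fin (n - 1) × Fin (m - 1)) :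
    ((star v ∩ plaquette f).card = 0 ∨ (star v ∩ plaquette f).card = 2) ∧
      XOp (star v) ∘ₗ ZOp (plaquette f) = ZOp (plaquette f) ∘ₗ XOp (star v) := by
  have hf1 : f.1.val < n - 1 := f.1.isLt
  have hf2 : f.2.val < m - 1 := f.2.isLt
  have hv1 : v.1.val < n := v.1.isLt
  have hv2 : v.2.val < m := v.2.isLt
  have hcard : (star v ∩ plaquette f).card = 0 ∨ (star v ∩ plaquette f).card = 2 := by
    by_cases hc : (v.1.val = f.1.val ∨ v.1.val = f.1.val + 1) ∧
        (v.2.val = f.2.val ∨ v.2.val = f.2.val + 1)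
    · right
      obtain ⟨hc1, hc2⟩ := hc
      have hj : f.2.val + 1 < m + 1 := by omega
      have hset : star v ∩ plaquette f =
          {PCEdge.horiz f.1 v.2, PCEdge.vert v.1 ⟨f.2.val + 1, hj⟩} := by
        ext e
        cases e with
        | horiz i j =>
          simp only [_root_.star, plaquette, Finset.mem_inter, Finset.mem_filter]
          simp only [_root_.star, plaquette, inStar, inPlaquette, Finset.mem_inter,
            Finset.mem_filter, Finset.mem_univ, true_and, Bool.and_eq_true,
            Bool.or_eq_true, decide_eq_true_eq, Finset.mem_insert,
            Finset.mem_singleton, PCEdge.horiz.injEq, Fin.ext_iff, reduceCtorEq,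
            or_false]
          omega
        | vert i j =>
          simp only [_root_.star, plaquette, Finset.mem_inter, Finset.mem_filter]
          simp only [_root_.star, plaquette, inStar, inPlaquette, Finset.mem_inter,
            Finset.mem_filter, Finset.mem_univ, true_and, Bool.and_eq_true,
            Bool.or_eq_true, decide_eq_true_eq, Finset.mem_insert,
            Finset.mem_singleton, PCEdge.vert.injEq, Fin.ext_iff, reduceCtorEq,
            false_or]
          omega
      rw [hset]
      rw [Finset.card_pair (by simp)]
    · left
      rw [Finset.card_eq_zero, Finset.eq_empty_iff_forall_notMem]
      intro e he
      rw [not_and_or] at hc; push_neg at hc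
      cases e with
      | horiz i j =>
        simp only [_root_.star, plaquette, Finset.mem_inter, Finset.mem_filter] at he
        simp only [_root_.star, plaquette, inStar, inPlaquette, Finset.mem_inter,
          Finset.mem_filter, Finset.mem_univ, true_and, Bool.and_eq_true,
          Bool.or_eq_true, decide_eq_true_eq, Fin.ext_iff] at he
        omega
      | vert i j =>
        simp only [_root_.star, plaquette, Finset.mem_inter, Finset.mem_filter] at he
        simp only [_root_.star, plaquette, inStar, inPlaquette, Finset.mem_inter,
          Finset.mem_filter, Finset.mem_univ, true_and, Bool.and_eq_true,
          Bool.or_eq_true, decide_eq_true_eq, Fin.ext_iff] at he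
        omega
  refine ⟨hcard, XZ_comm _ _ ?_⟩
  rcases hcard with h | h <;> simp [h]

end
end
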